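/- Let V be a finite-dimensional vector space over a field F and let L : V → V be a linear map. Let γ ∈ V lie in the generalized eigenspace maxGenEigenspace(L, 1), and assume the cyclic subspace ⟨γ⟩ = span_F{ Lⁿ(γ) : n ∈ ℕ } admits an L-invariant complement in V (an L-invariant subspace W with ⟨γ⟩ ⊕ W = V). Then the smallest k ∈ ℕ with (L - id_V)^k(γ) = 0 equals τ(γ, L). -/

import Mathlib

variable {F V : Type*} [Field F] [AddCommGroup V] [Module F V]

/-- `τ(α, L)`: the smallest `k ∈ ℕ` such that
`α ∈ range (L - id) + ker ((L - id)^k)`. -/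
noncomputable def tau (L : V →ₗ[F] V) (α : V) : ℕ :=
  sInf {k : ℕ | α ∈ LinearMap.range (L - LinearMap.id : V →ₗ[F] V) ⊔
    LinearMap.ker ((L - LinearMap.id : V →ₗ[F] V) ^ k)}

/-- If `γ` lies in the generalized eigenspace of `L` for eigenvalue 1
and the cyclic subspace `⟨γ⟩` has an `L`-invariant complement in `V`, then the
smallest `k` with `(L - id)^k γ = 0` equals `τ(γ, L)`. -/
theorem tau_eq_nilpotence_degree_of_complemented
    [FiniteDimensional F V] (L : V →ₗ[F] V) (γ : V)
    (hγ : γ ∈ Module.End.maxGenEigenspace L 1)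
    (hcompl : ∃ W : Submodule F V, (∀ w ∈ W, L w ∈ W) ∧
      IsCompl (Submodule.span F (Set.range fun n : ℕ => (L ^ n) γ)) W) :
    IsLeast {k : ℕ | ((L - LinearMap.id : V →ₗ[F] V) ^ k) γ = 0} (tau L γ) := by
  obtain ⟨W, hW, hc⟩ := hcompl
  set N : V →ₗ[F] V := L - LinearMap.id with hN
  set U : Submodule F V := Submodule.span F (Set.range fun n : ℕ => (L ^ n) γ) with hU
  -- γ ∈ U
  have hγU : γ ∈ U := Submodule.subset_span ⟨0, by simp⟩
  -- N commutes with L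
  have h1eq : (LinearMap.id : V →ₗ[F] V) = 1 := rfl
  have hC : Commute N L := by
    rw [hN, h1eq]
    exact (Commute.refl L).sub_left (Commute.one_left L)
  -- maxGenEigenspace membership: ∃ m, N^m γ = 0
  rw [Module.End.mem_maxGenEigenspace] at hγ
  obtain ⟨m, hm⟩ := hγ
  have hm' : (N ^ m) γ = 0 := by
    simpa [hN, one_smul, h1eq] using hm
  -- d = least with N^d γ = 0
  set S : Set ℕ := {k : ℕ | (N ^ k) γ = 0} with hS
  have hSne : S.Nonempty := ⟨m, hm'⟩
  set d : ℕ := sInf S with hd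
  have hdS : d ∈ S := Nat.sInf_mem hSne
  -- U is N-stable
  have hUL : ∀ u ∈ U, L u ∈ U := by
    intro u hu
    induction hu using Submodule.span_induction with
    | mem x hx =>
        obtain ⟨n, rfl⟩ := hx
        refine Submodule.subset_span ⟨n + 1, ?_⟩
        show (L ^ (n + 1)) γ = L ((L ^ n) γ)
        rw [pow_succ', Module.End.mul_apply]
    | zero => simp
    | add x y _ _ hx hy => simpa using Submodule.add_mem _ hx hy
    | smul c x _ hx => simpa using Submodule.smul_mem _ c hx
  have hUN : ∀ u ∈ U, N u ∈ U := by
    intro u hu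
    simpa [hN] using Submodule.sub_mem _ (hUL u hu) hu
  have hWN : ∀ w ∈ W, N w ∈ W := by
    intro w hw
    simpa [hN] using Submodule.sub_mem _ (hW w hw) hw
  -- N^d kills U
  have hkill : ∀ u ∈ U, (N ^ d) u = 0 := by
    intro u hu
    induction hu using Submodule.span_induction with
    | mem x hx =>
        obtain ⟨n, rfl⟩ := hx
        have := congrArg (fun f : V →ₗ[F] V => f γ) (Commute.pow_pow hC d n)
        simp only [Module.End.mul_apply] at this
        rw [show ((N ^ d) ((L ^ n) γ)) = (L ^ n) ((N ^ d) γ) from this]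
        rw [hdS]; simp
    | zero => simp
    | add x y _ _ hx hy => simp [map_add, hx, hy]
    | smul c x _ hx => simp [map_smul, hx]
  -- projection onto U along W
  set π : V →ₗ[F] V := U.subtype ∘ₗ (U.projectionOnto W hc) with hπ
  have hπU : ∀ u ∈ U, π u = u := by
    intro u hu
    simp [hπ, Submodule.projectionOnto_apply_left hc ⟨u, hu⟩]
  have hπmem : ∀ v : V, π v ∈ U := fun v => (U.projectionOnto W hc v).2
  have hπW : ∀ w ∈ W, π w = 0 := by
    intro w hw
    simp [hπ, Submodule.projectionOnto_apply_of_mem_right hc hw]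
  have hπN : ∀ v : V, π (N v) = N (π v) := by
    intro v
    obtain ⟨u, w, hu, hw, rfl⟩ := Submodule.codisjoint_iff_exists_add_eq.mp hc.codisjoint v
    calc π (N (u + w)) = π (N u) + π (N w) := by rw [map_add, map_add]
      _ = N u + 0 := by rw [hπU _ (hUN u hu), hπW _ (hWN w hw)]
      _ = N (π (u + w)) := by
          rw [add_zero, map_add, hπU u hu, hπW w hw, add_zero]
  have hπNpow : ∀ (k : ℕ) (v : V), π ((N ^ k) v) = (N ^ k) (π v) := by
    intro k
    induction k with
    | zero => simp
    | succ k ih =>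
        intro v
        rw [pow_succ', Module.End.mul_apply, hπN, ih, ← Module.End.mul_apply, ← pow_succ']
  -- main claim: any k in the tau set with is ≥ d, indeed tau set ⊆ {k | k ≥ d}? No:
  -- k ∈ tau-set → d ≤ k.
  have key : ∀ k, γ ∈ LinearMap.range N ⊔ LinearMap.ker (N ^ k) → d ≤ k := by
    intro k hk
    by_contra hlt
    push_neg at hlt
    obtain ⟨y, hy, z, hz, hyz⟩ := Submodule.mem_sup.mp hk
    obtain ⟨v, rfl⟩ := hy
    rw [LinearMap.mem_ker] at hz
    have hd1 : (N ^ (d - 1)) γ = 0 := by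
      have hγeq : γ = N (π v) + π z := by
        conv_lhs => rw [← hπU γ hγU, ← hyz]
        rw [map_add, hπN]
      have h1 : (N ^ (d - 1)) (N (π v)) = 0 := by
        have heq : N ^ (d - 1) * N = N ^ d := by
          rw [← pow_succ]; congr 1; omega
        have : (N ^ (d - 1)) (N (π v)) = (N ^ d) (π v) := by
          rw [← Module.End.mul_apply, heq]
        rw [this]
        exact hkill _ (hπmem v)
      have h2 : (N ^ (d - 1)) (π z) = 0 := by
        have hkz : (N ^ k) (π z) = 0 := by rw [← hπNpow, hz, map_zero]
        have heq : N ^ (d - 1) = N ^ (d - 1 - k) * N ^ k := by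
          rw [← pow_add]; congr 1; omega
        rw [heq, Module.End.mul_apply, hkz, map_zero]
      rw [hγeq, map_add, h1, h2, add_zero]
    have : d ≤ d - 1 := Nat.sInf_le hd1
    omega
  -- the tau set contains d
  have hdT : γ ∈ LinearMap.range N ⊔ LinearMap.ker (N ^ d) :=
    Submodule.mem_sup_right (LinearMap.mem_ker.mpr hdS)
  have hdT' : d ∈ {k : ℕ | γ ∈ LinearMap.range N ⊔ LinearMap.ker (N ^ k)} := hdT
  have htau : tau L γ = d := by
    have h1 : tau L γ ≤ d := Nat.sInf_le hdT'
    have h2 : d ≤ tau L γ := by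
      apply key
      exact Nat.sInf_mem (⟨d, hdT'⟩ : Set.Nonempty _)
    omega
  rw [htau]
  exact ⟨hdS, fun k hk => Nat.sInf_le hk⟩
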